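/- Let R be a local ring, let x_1, …, x_d be a regular sequence in R, let a ≥ b ≥ 1 be integers. Then the colon ideal (x_1^a, …, x_d^a) :_R (x_1 ⋯ x_d)^b equals (x_1^{a−b}, …, x_d^{a−b}). -/

import Mathlib

namespace Stmt17Aux

variable {R : Type*} [CommRing R]

/-- `y` is a nonzerodivisor modulo the ideal `N`. -/
def Rg (N : Ideal R) (y : R) : Prop := ∀ r : R, r * y ∈ N → r ∈ N

/-- weakly regular sequence relative to a base ideal `N`. -/
def WRb : List R → Ideal R → Prop
  | [], _ => True
  | y :: l, N => Rg N y ∧ WRb l (N ⊔ Ideal.span {y})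

lemma wrb_nil (N : Ideal R) : WRb ([] : List R) N := trivial

lemma wrb_cons_iff {y : R} {l : List R} {N : Ideal R} :
    WRb (y :: l) N ↔ Rg N y ∧ WRb l (N ⊔ Ideal.span {y}) := Iff.rfl

lemma WRb.of_eq {l : List R} {N N' : Ideal R} (h : WRb l N) (e : N = N') : WRb l N' := e ▸ h

lemma mem_sup_singleton {N : Ideal R} {y r : R} :
    r ∈ N ⊔ Ideal.span {y} ↔ ∃ n ∈ N, ∃ s : R, r = n + s * y := by
  constructor
  · intro h
    rcases Submodule.mem_sup.mp h with ⟨n, hn, z, hz, hsum⟩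
    rcases Ideal.mem_span_singleton'.mp hz with ⟨s, rfl⟩
    exact ⟨n, hn, s, hsum.symm⟩
  · rintro ⟨n, hn, s, rfl⟩
    exact Submodule.add_mem_sup hn (Ideal.mem_span_singleton'.mpr ⟨s, rfl⟩)

lemma Rg.pow {N : Ideal R} {y : R} (h : Rg N y) : ∀ c : ℕ, Rg N (y ^ c)
  | 0 => fun r hr => by simpa using hr
  | c + 1 => fun r hr => by
    have : (r * y) * y ^ c ∈ N := by rw [pow_succ] at hr; convert hr using 1; ring
    exact h r (Rg.pow h c (r * y) this)

/-- The key "short exact sequence" induction. -/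
lemma LM (y : R) (k : ℕ) (l : List R) :
    ∀ (N : Ideal R),
      (∀ t : R, y ^ k * t ∈ N ⊔ Ideal.span {y ^ (k + 1)} → t ∈ N ⊔ Ideal.span {y}) →
      WRb l (N ⊔ Ideal.span {y}) → WRb l (N ⊔ Ideal.span {y ^ k}) →
      WRb l (N ⊔ Ideal.span {y ^ (k + 1)}) := by
  induction l with
  | nil => intro N _ _ _; trivial
  | cons z l ih =>
    intro N hphi h1 h2
    obtain ⟨h1h, h1t⟩ := h1
    obtain ⟨h2h, h2t⟩ := h2
    constructor
    · -- head : Rg (N ⊔ (y^(k+1))) z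
      intro r hr
      rcases mem_sup_singleton.mp hr with ⟨n, hn, s, he⟩
      have hr' : r * z ∈ N ⊔ Ideal.span {y ^ k} := by
        rw [he]
        refine Submodule.add_mem _ (Ideal.mem_sup_left hn) ?_
        exact Ideal.mem_sup_right (Ideal.mem_span_singleton'.mpr ⟨s * y, by ring⟩)
      rcases mem_sup_singleton.mp (h2h r hr') with ⟨n', hn', t, he'⟩
      have h3 : y ^ k * (t * z) ∈ N ⊔ Ideal.span {y ^ (k + 1)} := by
        have he3 : y ^ k * (t * z) = (n - n' * z) + s * y ^ (k + 1) := by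
          linear_combination he - z * he'
        rw [he3]
        exact Submodule.add_mem _
          (Ideal.mem_sup_left (N.sub_mem hn (N.mul_mem_right z hn')))
          (Ideal.mem_sup_right (Ideal.mem_span_singleton'.mpr ⟨s, rfl⟩))
      rcases mem_sup_singleton.mp (h1h t (hphi (t * z) h3)) with ⟨n'', hn'', u, he''⟩
      refine mem_sup_singleton.mpr ⟨n' + n'' * y ^ k, N.add_mem hn' (N.mul_mem_right _ hn''), u, ?_⟩
      rw [he', he'']; ring
    · -- tail
      have hphi' : ∀ t : R, y ^ k * t ∈ (N ⊔ Ideal.span {z}) ⊔ Ideal.span {y ^ (k + 1)} →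
          t ∈ (N ⊔ Ideal.span {z}) ⊔ Ideal.span {y} := by
        intro t ht
        rcases Submodule.mem_sup.mp ht with ⟨w, hw, v, hv, hsum⟩
        rcases mem_sup_singleton.mp hw with ⟨n, hn, a, hea⟩
        rcases Ideal.mem_span_singleton'.mp hv with ⟨s, rfl⟩
        have haz : a * z ∈ N ⊔ Ideal.span {y ^ k} := by
          have he4 : a * z = (y ^ k * (t - s * y) - n) := by linear_combination hsum - hea
          rw [he4]
          refine Submodule.sub_mem _ ?_ (Ideal.mem_sup_left hn)
          exact Ideal.mem_sup_right (Ideal.mem_span_singleton'.mpr ⟨t - s * y, mul_comm _ _⟩)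
        rcases mem_sup_singleton.mp (h2h a haz) with ⟨n₂, hn₂, u, heu⟩
        have h5 : y ^ k * (t - u * z) ∈ N ⊔ Ideal.span {y ^ (k + 1)} := by
          have he5 : y ^ k * (t - u * z) = (n + n₂ * z) + s * y ^ (k + 1) := by
            linear_combination -hsum + hea + z * heu
          rw [he5]
          exact Submodule.add_mem _
            (Ideal.mem_sup_left (N.add_mem hn (N.mul_mem_right z hn₂)))
            (Ideal.mem_sup_right (Ideal.mem_span_singleton'.mpr ⟨s, rfl⟩))
        rcases mem_sup_singleton.mp (hphi _ h5) with ⟨m, hm, v, hev⟩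
        have : t = (m + u * z) + v * y := by linear_combination hev
        rw [this]
        exact Submodule.add_mem _
          (Ideal.mem_sup_left (Submodule.add_mem _ (Ideal.mem_sup_left hm)
            (Ideal.mem_sup_right (Ideal.mem_span_singleton'.mpr ⟨u, rfl⟩))))
          (Ideal.mem_sup_right (Ideal.mem_span_singleton'.mpr ⟨v, rfl⟩))
      have := ih (N ⊔ Ideal.span {z}) hphi'
        (h1t.of_eq (sup_right_comm N (Ideal.span {y}) (Ideal.span {z})))
        (h2t.of_eq (sup_right_comm N (Ideal.span {y ^ k}) (Ideal.span {z})))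
      exact this.of_eq (sup_right_comm N (Ideal.span {z}) (Ideal.span {y ^ (k + 1)}))


lemma PL {y : R} {l : List R} {N : Ideal R} (h : WRb (y :: l) N) (c : ℕ) :
    WRb (y ^ (c + 1) :: l) N := by
  induction c with
  | zero => simpa only [zero_add, pow_one] using h
  | succ c ihc =>
    refine ⟨h.1.pow _, ?_⟩
    have hphi : ∀ t : R, y ^ (c + 1) * t ∈ N ⊔ Ideal.span {y ^ (c + 1 + 1)} →
        t ∈ N ⊔ Ideal.span {y} := by
      intro t ht
      rcases mem_sup_singleton.mp ht with ⟨n, hn, s, he⟩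
      have h2 : (t - s * y) * y ^ (c + 1) ∈ N := by
        have : (t - s * y) * y ^ (c + 1) = n := by
          rw [show c + 1 + 1 = (c + 1) + 1 from rfl] at he
          linear_combination he
        rwa [this]
      have h3 := h.1.pow (c + 1) _ h2
      exact mem_sup_singleton.mpr ⟨t - s * y, h3, s, by ring⟩
    have := LM y (c + 1) l N hphi h.2 (ihc).2
    exact this


lemma wrb_append : ∀ (l₁ l₂ : List R) (N : Ideal R), WRb (l₁ ++ l₂) N →
    WRb l₁ N ∧ WRb l₂ (N ⊔ Ideal.ofList l₁) := by
  intro l₁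
  induction l₁ with
  | nil => intro l₂ N h; exact ⟨trivial, h.of_eq (by simp)⟩
  | cons y l₁ ih =>
    intro l₂ N h
    obtain ⟨hy, ht⟩ := h
    obtain ⟨ha, hb⟩ := ih l₂ (N ⊔ Ideal.span {y}) ht
    refine ⟨⟨hy, ha⟩, hb.of_eq ?_⟩
    rw [Ideal.ofList_cons, sup_assoc]

lemma Hp : ∀ (l : List R) (N : Ideal R) (y : R), WRb (y :: l) N →
    Rg (N ⊔ Ideal.ofList l) y := by
  intro l
  induction l using List.reverseRecOn with
  | nil =>
    intro N y h r hr
    simp only [Ideal.ofList_nil, sup_bot_eq] at hr ⊢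
    exact h.1 r hr
  | append_singleton l' w ih =>
    intro N y h r hr
    obtain ⟨h1, h2⟩ := wrb_append (y :: l') [w] N h
    have hw : Rg (N ⊔ Ideal.ofList (y :: l')) w := h2.1
    have eL : N ⊔ Ideal.ofList (l' ++ [w]) = (N ⊔ Ideal.ofList l') ⊔ Ideal.span {w} := by
      rw [Ideal.ofList_append, Ideal.ofList_singleton, sup_assoc]
    rw [eL] at hr
    rcases mem_sup_singleton.mp hr with ⟨m, hm, s, he⟩
    have hsw : s * w ∈ N ⊔ Ideal.ofList (y :: l') := by
      have e2 : N ⊔ Ideal.ofList (y :: l') = (N ⊔ Ideal.ofList l') ⊔ Ideal.span {y} := by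
        rw [Ideal.ofList_cons, ← sup_assoc, sup_right_comm]
      rw [e2]
      have : s * w = r * y - m := by linear_combination -he
      rw [this]
      refine Submodule.sub_mem _ ?_ (Ideal.mem_sup_left hm)
      exact Ideal.mem_sup_right (Ideal.mem_span_singleton'.mpr ⟨r, rfl⟩)
    have hs := hw s hsw
    rw [show N ⊔ Ideal.ofList (y :: l') = (N ⊔ Ideal.ofList l') ⊔ Ideal.span {y} by
      rw [Ideal.ofList_cons, ← sup_assoc, sup_right_comm]] at hs
    rcases mem_sup_singleton.mp hs with ⟨m₂, hm₂, a, hea⟩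
    have key : (r - a * w) * y ∈ N ⊔ Ideal.ofList l' := by
      have : (r - a * w) * y = m + m₂ * w := by linear_combination he + w * hea
      rw [this]
      exact Submodule.add_mem _ hm ((N ⊔ Ideal.ofList l').mul_mem_right w hm₂)
    have := ih N y h1 _ key
    rw [eL]
    have : r = (r - a * w) + a * w := by ring
    rw [this]
    exact Submodule.add_mem _ (Ideal.mem_sup_left ‹r - a * w ∈ N ⊔ Ideal.ofList l'›)
      (Ideal.mem_sup_right (Ideal.mem_span_singleton'.mpr ⟨a, rfl⟩))


lemma powfin : ∀ (d : ℕ) (x : Fin d → R) (N : Ideal R), WRb (List.ofFn x) N →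
    ∀ (e : Fin d → ℕ), (∀ i, 1 ≤ e i) → WRb (List.ofFn fun i => x i ^ e i) N := by
  intro d
  induction d with
  | zero => intro x N _ e _; simp only [List.ofFn_zero]; trivial
  | succ d ih =>
    intro x N h e he
    rw [List.ofFn_succ] at h ⊢
    have H : WRb (x 0 ^ e 0 :: List.ofFn fun i : Fin d => x i.succ) N := by
      have := PL h (e 0 - 1)
      rwa [Nat.sub_add_cancel (he 0)] at this
    exact ⟨H.1, ih (fun i => x i.succ) _ H.2 (fun i => e i.succ) (fun i => he i.succ)⟩

lemma gfin : ∀ (d : ℕ) (y : Fin d → R) (N : Ideal R), WRb (List.ofFn y) N →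
    ∀ j : Fin d, Rg (N ⊔ Ideal.span (y '' {i | i ≠ j})) (y j) := by
  intro d
  induction d with
  | zero => intro y N h j; exact j.elim0
  | succ d ih =>
    intro y N h j
    rw [List.ofFn_succ] at h
    refine Fin.cases ?_ ?_ j
    · have h0 := Hp _ N (y 0) h
      have e1 : Ideal.ofList (List.ofFn fun i : Fin d => y i.succ)
          = Ideal.span (y '' {i | i ≠ 0}) := by
        show Ideal.span _ = _
        congr 1
        ext z
        simp only [Set.mem_setOf_eq, List.mem_ofFn, Set.mem_image]
        constructor
        · rintro ⟨i, rfl⟩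
          exact ⟨i.succ, Fin.succ_ne_zero i, rfl⟩
        · rintro ⟨i, hi0, rfl⟩
          obtain ⟨k, rfl⟩ := Fin.exists_succ_eq.mpr hi0
          exact ⟨k, rfl⟩
      rw [e1] at h0
      exact h0
    · intro j'
      have hres := ih (fun i => y i.succ) (N ⊔ Ideal.span {y 0}) h.2 j'
      have eset : y '' {i | i ≠ j'.succ}
          = insert (y 0) ((fun i : Fin d => y i.succ) '' {i | i ≠ j'}) := by
        ext z
        simp only [Set.mem_image, Set.mem_setOf_eq, Set.mem_insert_iff]
        constructor
        · rintro ⟨i, hne, rfl⟩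
          refine Fin.cases ?_ ?_ i hne
          · intro _; exact Or.inl rfl
          · intro k hk
            exact Or.inr ⟨k, fun hkk => hk (by rw [hkk]), rfl⟩
        · rintro (rfl | ⟨k, hk, rfl⟩)
          · exact ⟨0, fun h0 => Fin.succ_ne_zero j' h0.symm, rfl⟩
          · exact ⟨k.succ, fun hkk => hk (Fin.succ_injective _ hkk), rfl⟩
      have eid : N ⊔ Ideal.span (y '' {i | i ≠ j'.succ})
          = (N ⊔ Ideal.span {y 0}) ⊔ Ideal.span ((fun i : Fin d => y i.succ) '' {i | i ≠ j'}) := by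
        rw [eset, Ideal.span_insert, ← sup_assoc]
      rw [eid]
      exact hres

lemma C1 {K : Ideal R} {y : R} (hy : Rg K y) {a b : ℕ} (hba : b ≤ a) (r : R)
    (h : r * y ^ b ∈ K ⊔ Ideal.span {y ^ a}) : r ∈ K ⊔ Ideal.span {y ^ (a - b)} := by
  rcases mem_sup_singleton.mp h with ⟨n, hn, s, he⟩
  have hab' : (a - b) + b = a := Nat.sub_add_cancel hba
  have h2 : (r - s * y ^ (a - b)) * y ^ b ∈ K := by
    have : (r - s * y ^ (a - b)) * y ^ b = n := by
      rw [← hab', pow_add] at he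
      linear_combination he
    rwa [this]
  exact mem_sup_singleton.mpr ⟨_, hy.pow b _ h2, s, by ring⟩


lemma iwr_to_wrb : ∀ (l : List R) (N : Ideal R),
    (∀ (i : ℕ) (h : i < l.length) (r : R),
      r * l[i] ∈ N ⊔ Ideal.ofList (l.take i) → r ∈ N ⊔ Ideal.ofList (l.take i)) →
    WRb l N := by
  intro l
  induction l with
  | nil => intro N _; trivial
  | cons y l ih =>
    intro N h
    constructor
    · intro r hr
      have h0 := h 0 (by simp) r (by simpa using hr)
      simpa using h0
    · apply ih
      intro i hi r hri
      have e1 : N ⊔ Ideal.span {y} ⊔ Ideal.ofList (l.take i)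
          = N ⊔ Ideal.ofList ((y :: l).take (i + 1)) := by
        rw [List.take_succ_cons, Ideal.ofList_cons, sup_assoc]
      rw [e1] at hri ⊢
      exact h (i + 1) (by simpa using hi) r hri

lemma wrb_of_isWeaklyRegular {l : List R} (h : RingTheory.Sequence.IsWeaklyRegular R l) :
    WRb l ⊥ := by
  apply iwr_to_wrb
  intro i hi r hr
  rw [bot_sup_eq] at hr ⊢
  have hreg := h.regular_mod_prev i hi
  set I := Ideal.ofList (l.take i) with hI
  have hIT : (I • (⊤ : Submodule R R)) = I := by
    rw [Ideal.smul_eq_mul, Ideal.mul_top]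
  have hmk : (Submodule.Quotient.mk (r * l[i]) :
      R ⧸ (I • (⊤ : Submodule R R))) = 0 := by
    rw [Submodule.Quotient.mk_eq_zero, hIT]
    exact hr
  have h2 : l[i] • (Submodule.Quotient.mk r : R ⧸ (I • (⊤ : Submodule R R))) = l[i] • 0 := by
    have e : l[i] • r = r * l[i] := by rw [smul_eq_mul, mul_comm]
    rw [smul_zero, ← Submodule.Quotient.mk_smul, e]
    exact hmk
  have h3 := hreg h2
  have h4 : r ∈ I • (⊤ : Submodule R R) := (Submodule.Quotient.mk_eq_zero _).mp h3
  rwa [hIT] at h4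


lemma mainloop (d : ℕ) (x : Fin d → R) (hw : WRb (List.ofFn x) ⊥)
    (a b : ℕ) (hba : b ≤ a) (hab1 : 1 ≤ a - b) :
    ∀ (j : ℕ), j ≤ d → ∀ r : R,
      r * (∏ i ∈ Finset.univ.filter (fun i : Fin d => (i : ℕ) < j), x i ^ b)
        ∈ Ideal.span ((fun i => x i ^ a) '' {i | (i : ℕ) < j})
          ⊔ Ideal.span ((fun i => x i ^ (a - b)) '' {i | j ≤ (i : ℕ)}) →
      r ∈ Ideal.span (Set.range fun i => x i ^ (a - b)) := by
  intro j
  induction j with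
  | zero =>
    intro _ r hr
    have e0 : (Finset.univ.filter fun i : Fin d => (i : ℕ) < 0) = ∅ := by
      ext i; simp
    have e1 : {i : Fin d | (i : ℕ) < 0} = ∅ := by ext i; simp
    have e2 : {i : Fin d | 0 ≤ (i : ℕ)} = Set.univ := by ext i; simp
    rw [e0, Finset.prod_empty, mul_one, e1, e2, Set.image_empty, Set.image_univ,
      Ideal.span_empty, bot_sup_eq] at hr
    exact hr
  | succ j ih =>
    intro hj r hr
    have hjd : j < d := hj
    set jF : Fin d := ⟨j, hjd⟩ with hjF
    have hvj : (jF : ℕ) = j := rfl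
    -- the ideal K
    set A := Ideal.span ((fun i => x i ^ a) '' {i : Fin d | (i : ℕ) < j}) with hA
    set B := Ideal.span ((fun i => x i ^ (a - b)) '' {i : Fin d | j + 1 ≤ (i : ℕ)}) with hB
    set K := A ⊔ B with hK
    -- Rg K (x jF)
    have hKreg : Rg K (x jF) := by
      set e : Fin d → ℕ := fun i => if (i : ℕ) < j then a else if i = jF then 1 else a - b
        with he
      have hwp := powfin d x ⊥ hw e (by
        intro i
        simp only [he]
        split
        · omega
        · split
          · omega
          · exact hab1)
      have hg := gfin d (fun i => x i ^ e i) ⊥ hwp jF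
      have hejF : e jF = 1 := by simp [he, hvj]
      have s3 : {i : Fin d | i ≠ jF} = {i : Fin d | (i : ℕ) < j} ∪ {i : Fin d | j + 1 ≤ (i : ℕ)} := by
        ext i
        simp only [Set.mem_setOf_eq, Set.mem_union, ne_eq, Fin.ext_iff, hvj]
        omega
      have eimg1 : (fun i : Fin d => x i ^ e i) '' {i : Fin d | (i : ℕ) < j}
          = (fun i => x i ^ a) '' {i : Fin d | (i : ℕ) < j} := by
        apply Set.image_congr
        intro i hi
        simp only [Set.mem_setOf_eq] at hi
        simp [he, hi]
      have eimg2 : (fun i : Fin d => x i ^ e i) '' {i : Fin d | j + 1 ≤ (i : ℕ)}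
          = (fun i => x i ^ (a - b)) '' {i : Fin d | j + 1 ≤ (i : ℕ)} := by
        apply Set.image_congr
        intro i hi
        simp only [Set.mem_setOf_eq] at hi
        have h1 : ¬ ((i : ℕ) < j) := by omega
        have h2 : i ≠ jF := by
          simp only [ne_eq, Fin.ext_iff, hvj]; omega
        simp [he, h1, h2]
      have eid : (⊥ : Ideal R) ⊔ Ideal.span ((fun i : Fin d => x i ^ e i) '' {i | i ≠ jF}) = K := by
        rw [bot_sup_eq, s3, Set.image_union, Ideal.span_union, eimg1, eimg2]
      rw [eid, hejF, pow_one] at hg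
      exact hg
    -- split the product
    have eP : (Finset.univ.filter fun i : Fin d => (i : ℕ) < j + 1)
        = insert jF (Finset.univ.filter fun i : Fin d => (i : ℕ) < j) := by
      ext i
      simp only [Finset.mem_filter, Finset.mem_univ, true_and, Finset.mem_insert, Fin.ext_iff, hvj]
      omega
    have hnotmem : jF ∉ Finset.univ.filter fun i : Fin d => (i : ℕ) < j := by
      simp [hvj]
    -- split the span A'
    have s1 : {i : Fin d | (i : ℕ) < j + 1} = insert jF {i : Fin d | (i : ℕ) < j} := by
      ext i
      simp only [Set.mem_setOf_eq, Set.mem_insert_iff, Fin.ext_iff, hvj]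
      omega
    have s2 : {i : Fin d | j ≤ (i : ℕ)} = insert jF {i : Fin d | j + 1 ≤ (i : ℕ)} := by
      ext i
      simp only [Set.mem_setOf_eq, Set.mem_insert_iff, Fin.ext_iff, hvj]
      omega
    -- rewrite the hypothesis
    rw [eP, Finset.prod_insert hnotmem, s1, Set.image_insert_eq, Ideal.span_insert] at hr
    have hr2 : (r * ∏ i ∈ Finset.univ.filter (fun i : Fin d => (i : ℕ) < j), x i ^ b)
        * x jF ^ b ∈ K ⊔ Ideal.span {x jF ^ a} := by
      have : Ideal.span {x jF ^ a} ⊔ A ⊔ B = K ⊔ Ideal.span {x jF ^ a} := by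
        rw [hK]; ac_rfl
      rw [show (r * ∏ i ∈ Finset.univ.filter (fun i : Fin d => (i : ℕ) < j), x i ^ b)
            * x jF ^ b
          = r * (x jF ^ b * ∏ i ∈ Finset.univ.filter (fun i : Fin d => (i : ℕ) < j), x i ^ b)
          from by ring, ← this]
      exact hr
    have hr3 := C1 hKreg hba _ hr2
    apply ih (le_of_lt hjd) r
    have efin : K ⊔ Ideal.span {x jF ^ (a - b)}
        = A ⊔ Ideal.span ((fun i => x i ^ (a - b)) '' {i : Fin d | j ≤ (i : ℕ)}) := by
      rw [s2, Set.image_insert_eq, Ideal.span_insert, hK]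
      ac_rfl
    rw [efin] at hr3
    exact hr3

end Stmt17Aux

/-- If `x₁, …, x_d` is a regular sequence in a local ring `R` and `a ≥ b ≥ 1`, then
`(x₁^a, …, x_d^a) : (x₁ ⋯ x_d)^b = (x₁^{a-b}, …, x_d^{a-b})`. -/
theorem stmt17 (R : Type) [CommRing R] [IsLocalRing R]
    (d : ℕ) (x : Fin d → R) (hreg : RingTheory.Sequence.IsRegular R (List.ofFn x))
    (a b : ℕ) (hb : 1 ≤ b) (hab : b ≤ a) :
    (Ideal.span (Set.range fun i => x i ^ a)).colon (Ideal.span {(∏ i, x i) ^ b})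
      = Ideal.span (Set.range fun i => x i ^ (a - b)) := by
  have hw : Stmt17Aux.WRb (List.ofFn x) (⊥ : Ideal R) :=
    Stmt17Aux.wrb_of_isWeaklyRegular hreg.toIsWeaklyRegular
  apply le_antisymm
  · intro r hr
    rw [Ideal.mem_colon_span_singleton] at hr
    rcases eq_or_lt_of_le hab with rfl | hlt
    · rcases Nat.eq_zero_or_pos d with rfl | hd
      · simp only [Set.range_eq_empty, Ideal.span_empty, Finset.univ_eq_empty,
          Finset.prod_empty, one_pow, mul_one] at hr ⊢
        exact hr
      · have h1 : (1 : R) ∈ Ideal.span (Set.range fun i => x i ^ (b - b)) :=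
          Ideal.subset_span ⟨⟨0, hd⟩, by simp⟩
        have h2 := (Ideal.eq_top_iff_one _).mpr h1
        rw [h2]
        exact Submodule.mem_top
    · apply Stmt17Aux.mainloop d x hw a b hab (by omega) d le_rfl r
      have ef : (Finset.univ.filter fun i : Fin d => (i : ℕ) < d) = Finset.univ := by
        ext i; simp [i.isLt]
      have s1 : {i : Fin d | (i : ℕ) < d} = Set.univ := by
        ext i; simp [i.isLt]
      have s2 : {i : Fin d | d ≤ (i : ℕ)} = ∅ := by
        ext i; simp [Nat.not_le.mpr i.isLt]
      rw [ef, Finset.prod_pow, s1, Set.image_univ, s2, Set.image_empty, Ideal.span_empty,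
        sup_bot_eq]
      exact hr
  · rw [Ideal.span_le]
    rintro z ⟨i, rfl⟩
    rw [SetLike.mem_coe, Ideal.mem_colon_span_singleton]
    have e1 : x i ^ (a - b) * (∏ k, x k) ^ b
        = (∏ k ∈ Finset.univ.erase i, x k ^ b) * x i ^ a := by
      have hpow : x i ^ (a - b) * x i ^ b = x i ^ a := by
        rw [← pow_add, Nat.sub_add_cancel hab]
      calc x i ^ (a - b) * (∏ k, x k) ^ b
          = x i ^ (a - b) * ∏ k, x k ^ b := by rw [Finset.prod_pow]
        _ = x i ^ (a - b) * (x i ^ b * ∏ k ∈ Finset.univ.erase i, x k ^ b) := by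
            rw [Finset.mul_prod_erase Finset.univ (fun k => x k ^ b) (Finset.mem_univ i)]
        _ = (x i ^ (a - b) * x i ^ b) * ∏ k ∈ Finset.univ.erase i, x k ^ b := by ring
        _ = x i ^ a * ∏ k ∈ Finset.univ.erase i, x k ^ b := by rw [hpow]
        _ = (∏ k ∈ Finset.univ.erase i, x k ^ b) * x i ^ a := by ring
    rw [e1]
    exact Ideal.mul_mem_left _ _ (Ideal.subset_span ⟨i, rfl⟩)
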